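/- arXiv:2308.01481 — 3 statements merged into one kernel-verified Lean document; each statement's English description precedes it below -/
import Mathlib

section
/- Let Q be a symmetric positive definite d×d real matrix, η > 0 with η‖Q‖₂ ≤ 1, a ∈ (1/2, 1), η_k = η k^{−a}, and γ = min(λ_min(Q), 1/(2η)). Then for all integers j > i ≥ 0, ‖W_i^j‖₂ ≤ exp(−η γ ∑_{k=i+1}^j k^{−a}) ≤ exp(−(γη/(1−a)) (j^{1−a} − (i+1)^{1−a})). -/
open MeasureTheory ProbabilityTheory Filter
open scoped Matrix.Norms.L2Operator ENNReal NNReal Topology RealInnerProductSpace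

noncomputable section

/-- `ℝ^d` with the Euclidean norm. -/
abbrev Vec (d : ℕ) := EuclideanSpace ℝ (Fin d)

/-- `d × d` real matrices; via `Matrix.L2OpNorm` the norm `‖·‖` on them is the
`ℓ²`-operator (spectral) norm `‖·‖₂`. -/
abbrev Mat (d : ℕ) := Matrix (Fin d) (Fin d) ℝ

/-- Matrix-vector multiplication on Euclidean space. -/
def mulVecE {d : ℕ} (A : Mat d) (v : Vec d) : Vec d :=
  (EuclideanSpace.equiv (Fin d) ℝ).symm (A.mulVec (EuclideanSpace.equiv (Fin d) ℝ v))

/-- Outer product `v wᵀ` of Euclidean vectors, as a matrix. -/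
def outerE {d : ℕ} (v w : Vec d) : Mat d :=
  Matrix.vecMulVec (EuclideanSpace.equiv (Fin d) ℝ v) (EuclideanSpace.equiv (Fin d) ℝ w)

/-- `W_i^j = ∏_{k=i+1}^{j} (I - η_k Q)`, with `W_i^i = I` (the factors commute, so the
order of multiplication is immaterial). -/
def Wprod {d : ℕ} (Q : Mat d) (ηk : ℕ → ℝ) (i j : ℕ) : Mat d :=
  ((List.range (j - i)).map fun m => (1 : Mat d) - ηk (i + 1 + m) • Q).prod

lemma diag_opNorm_le {d : ℕ} (w : Fin d → ℝ) {c : ℝ} (hc : 0 ≤ c) (hw : ∀ i, |w i| ≤ c) :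
    ‖(Matrix.diagonal w : Mat d)‖ ≤ c := by
  rw [Matrix.l2_opNorm_def]
  refine ContinuousLinearMap.opNorm_le_bound _ hc fun x => ?_
  simp only [LinearEquiv.trans_apply, LinearMap.coe_toContinuousLinearMap',
    Matrix.toEuclideanLin_apply]
  rw [EuclideanSpace.norm_eq, EuclideanSpace.norm_eq, ← Real.sqrt_sq hc,
    ← Real.sqrt_mul (by positivity)]
  apply Real.sqrt_le_sqrt
  rw [Finset.mul_sum]
  apply Finset.sum_le_sum
  intro i _
  simp only [Matrix.mulVec_diagonal, Real.norm_eq_abs, abs_mul,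
    mul_pow, sq_abs]
  have hx : (WithLp.equiv 2 (Fin d → ℝ)) x i = x i := rfl
  have h1 : (w i)^2 ≤ c^2 := by
    have := hw i
    nlinarith [abs_nonneg (w i), sq_abs (w i)]
  nlinarith [sq_nonneg (x i)]

lemma one_opNorm_le {d : ℕ} : ‖(1 : Mat d)‖ ≤ 1 := by
  rw [← Matrix.diagonal_one]
  exact diag_opNorm_le _ zero_le_one (fun i => by simp)

lemma eig_le_norm {d : ℕ} (Q : Mat d) (hH : Q.IsHermitian) (i : Fin d) :
    hH.eigenvalues i ≤ ‖Q‖ := by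
  have hb : ‖hH.eigenvectorBasis i‖ = 1 := hH.eigenvectorBasis.orthonormal.1 i
  have h : ‖(EuclideanSpace.equiv (Fin d) ℝ).symm
      (hH.eigenvalues i • ⇑(hH.eigenvectorBasis i))‖ ≤ ‖Q‖ * ‖hH.eigenvectorBasis i‖ := by
    rw [← hH.mulVec_eigenvectorBasis i]
    exact Q.l2_opNorm_mulVec (hH.eigenvectorBasis i)
  have hsymm : (EuclideanSpace.equiv (Fin d) ℝ).symm
      (hH.eigenvalues i • ⇑(hH.eigenvectorBasis i))
      = hH.eigenvalues i • hH.eigenvectorBasis i := rfl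
  rw [hsymm, norm_smul, hb, Real.norm_eq_abs, mul_one, mul_one] at h
  exact (le_abs_self _).trans h

open Matrix in
lemma factor_norm_le {d : ℕ} (Q : Mat d) (hQ : Q.PosDef) {γ s : ℝ}
    (hs : 0 ≤ s) (hγle : ∀ i, γ ≤ hQ.isHermitian.eigenvalues i)
    (hsl : ∀ i, s * hQ.isHermitian.eigenvalues i ≤ 1) (hsγ : s * γ ≤ 1) :
    ‖(1 : Mat d) - s • Q‖ ≤ 1 - s * γ := by
  have hH := hQ.isHermitian
  set U : Mat d := (hH.eigenvectorUnitary : Mat d) with hUdef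
  have hU1 : Uᴴ * U = 1 := by
    rw [← Matrix.star_eq_conjTranspose]
    exact Unitary.star_mul_self_of_mem hH.eigenvectorUnitary.2
  have hU2 : U * Uᴴ = 1 := by
    rw [← Matrix.star_eq_conjTranspose]
    exact Unitary.mul_star_self_of_mem hH.eigenvectorUnitary.2
  have hspec : Q = U * Matrix.diagonal hH.eigenvalues * Uᴴ := by
    have := hH.spectral_theorem
    simpa [Matrix.star_eq_conjTranspose, Function.comp] using this
  have hdecomp : (1 : Mat d) - s • Q
      = U * Matrix.diagonal (fun i => 1 - s * hH.eigenvalues i) * Uᴴ := by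
    have hdiag : Matrix.diagonal (fun i => 1 - s * hH.eigenvalues i)
        = (1 : Mat d) - s • Matrix.diagonal hH.eigenvalues := by
      ext i j
      by_cases h : i = j <;> simp [h, Matrix.diagonal_apply, Matrix.one_apply]
    rw [hdiag, mul_sub, sub_mul, mul_one, hU2, Matrix.mul_smul, Matrix.smul_mul, ← hspec]
  have hUn : ‖U‖ ≤ 1 := by
    have h := Matrix.l2_opNorm_conjTranspose_mul_self U
    rw [hU1] at h
    nlinarith [norm_nonneg U, one_opNorm_le (d := d), norm_nonneg (1 : Mat d)]
  have hUn' : ‖Uᴴ‖ ≤ 1 := by rw [Matrix.l2_opNorm_conjTranspose]; exact hUn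
  have hDn : ‖Matrix.diagonal (fun i => 1 - s * hH.eigenvalues i)‖ ≤ 1 - s * γ := by
    apply diag_opNorm_le _ (by linarith)
    intro i
    rw [abs_le]
    constructor
    · have h1 := hsl i
      linarith
    · have := mul_le_mul_of_nonneg_left (hγle i) hs
      linarith
  rw [hdecomp]
  set D := Matrix.diagonal (fun i => 1 - s * hH.eigenvalues i) with hD
  calc ‖U * D * Uᴴ‖
      ≤ ‖U * D‖ * ‖Uᴴ‖ := Matrix.l2_opNorm_mul _ _
    _ ≤ (‖U‖ * ‖D‖) * 1 :=
        mul_le_mul (Matrix.l2_opNorm_mul _ _) hUn' (norm_nonneg _) (by positivity)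
    _ ≤ (1 * (1 - s * γ)) * 1 := by
        have h := mul_le_mul hUn hDn (norm_nonneg _) zero_le_one
        nlinarith
    _ = 1 - s * γ := by ring

lemma rpow_step {a : ℝ} (ha1 : 0 ≤ 1 - a) (ha2 : 1 - a ≤ 1) {x : ℝ} (hx : 1 ≤ x) :
    (x + 1) ^ (1 - a) - x ^ (1 - a) ≤ (1 - a) * x ^ (-a) := by
  have hx0 : 0 < x := lt_of_lt_of_le one_pos hx
  have h1 : x + 1 = x * (1 + 1/x) := by field_simp
  have h2 : (x + 1) ^ (1 - a) = x ^ (1 - a) * (1 + 1/x) ^ (1 - a) := by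
    rw [h1, Real.mul_rpow hx0.le (by positivity)]
  have h3 : (1 + 1/x) ^ (1 - a) ≤ 1 + (1 - a) * (1/x) := by
    refine rpow_one_add_le_one_add_mul_self ?_ ha1 ha2
    have : 0 < 1/x := by positivity
    linarith
  have h4 : x ^ (1 - a) * (1/x) = x ^ (-a) := by
    rw [one_div, ← Real.rpow_neg_one x, ← Real.rpow_add hx0]
    congr 1
    ring
  have h5 : 0 ≤ x ^ (1 - a) := Real.rpow_nonneg hx0.le _
  calc (x + 1) ^ (1 - a) - x ^ (1 - a)
      ≤ x ^ (1 - a) * (1 + (1 - a) * (1/x)) - x ^ (1 - a) := by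
        rw [h2]; gcongr
    _ = (1 - a) * (x ^ (1 - a) * (1/x)) := by ring
    _ = (1 - a) * x ^ (-a) := by rw [h4]

lemma sum_rpow_lb {a : ℝ} (ha1 : 0 < 1 - a) (ha2 : 1 - a ≤ 1) (i j : ℕ) (hij : i < j) :
    ((j : ℝ) ^ (1 - a) - ((i : ℝ) + 1) ^ (1 - a)) / (1 - a)
      ≤ ∑ k ∈ Finset.Icc (i + 1) j, (k : ℝ) ^ (-a) := by
  have key : ((j : ℝ) + 1) ^ (1 - a) - ((i : ℝ) + 1) ^ (1 - a)
      ≤ ∑ k ∈ Finset.Icc (i + 1) j, (1 - a) * (k : ℝ) ^ (-a) := by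
    have hIcc : Finset.Icc (i + 1) j = Finset.Ico (i + 1) (j + 1) := by
      rw [Finset.Ico_add_one_right_eq_Icc]
    rw [hIcc, Finset.sum_Ico_eq_sum_range]
    have hn : j + 1 - (i + 1) = j - i := by omega
    rw [hn]
    have tele := Finset.sum_range_sub (fun m => ((i + 1 + m : ℕ) : ℝ) ^ (1 - a)) (j - i)
    have hji : i + 1 + (j - i) = j + 1 := by omega
    rw [hji] at tele
    calc ((j : ℝ) + 1) ^ (1 - a) - ((i : ℝ) + 1) ^ (1 - a)
        = ∑ m ∈ Finset.range (j - i),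
            (((i + 1 + (m + 1) : ℕ) : ℝ) ^ (1 - a) - ((i + 1 + m : ℕ) : ℝ) ^ (1 - a)) := by
          rw [tele]; push_cast; ring_nf
      _ ≤ ∑ m ∈ Finset.range (j - i), (1 - a) * ((i + 1 + m : ℕ) : ℝ) ^ (-a) := by
          apply Finset.sum_le_sum
          intro m _
          have h1 : (1 : ℝ) ≤ ((i + 1 + m : ℕ) : ℝ) := by
            have : 1 ≤ i + 1 + m := by omega
            exact_mod_cast this
          have := rpow_step ha1.le ha2 h1
          have hcast : ((i + 1 + (m + 1) : ℕ) : ℝ) = ((i + 1 + m : ℕ) : ℝ) + 1 := by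
            push_cast; ring
          rw [hcast]
          exact this
  have hj1 : ((j : ℝ)) ^ (1 - a) ≤ ((j : ℝ) + 1) ^ (1 - a) := by
    apply Real.rpow_le_rpow (by positivity) (by linarith) ha1.le
  rw [div_le_iff₀ ha1]
  calc (j : ℝ) ^ (1 - a) - ((i : ℝ) + 1) ^ (1 - a)
      ≤ ((j : ℝ) + 1) ^ (1 - a) - ((i : ℝ) + 1) ^ (1 - a) := by linarith
    _ ≤ ∑ k ∈ Finset.Icc (i + 1) j, (1 - a) * (k : ℝ) ^ (-a) := key
    _ = (∑ k ∈ Finset.Icc (i + 1) j, (k : ℝ) ^ (-a)) * (1 - a) := by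
        rw [Finset.sum_mul]; apply Finset.sum_congr rfl; intros; ring

lemma list_prod_range (f : ℕ → ℝ) (n : ℕ) :
    ((List.range n).map f).prod = ∏ m ∈ Finset.range n, f m := by
  induction n with
  | zero => simp
  | succ n ih =>
      rw [List.range_succ, List.map_append, List.prod_append, Finset.prod_range_succ, ih]
      simp

/-- **Lemma A.3**: for a symmetric positive definite `Q` with `η‖Q‖₂ ≤ 1` and step sizes
`η_k = η k^(-a)`, `a ∈ (1/2, 1)`, the matrix products `W_i^j` decay like
`exp(-ηγ ∑_{k=i+1}^j k^(-a)) ≤ exp(-(γη/(1-a)) (j^(1-a) - (i+1)^(1-a)))`, where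
`γ = min(λ_min(Q), 1/(2η))`. -/
theorem matrix_product_decay {d : ℕ} (Q : Mat d) (hQ : Q.PosDef) (hQsymm : Q.IsSymm)
    (η a : ℝ) (hη : 0 < η) (hηQ : η * ‖Q‖ ≤ 1) (ha : a ∈ Set.Ioo (1 / 2 : ℝ) 1)
    (ηk : ℕ → ℝ) (hηk : ∀ k : ℕ, ηk k = η * (k : ℝ) ^ (-a))
    (γ : ℝ) (hγ : γ = min (⨅ i, hQ.isHermitian.eigenvalues i) (1 / (2 * η))) :
    ∀ i j : ℕ, i < j →
      ‖Wprod Q ηk i j‖ ≤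
        Real.exp (-(η * γ) * ∑ k ∈ Finset.Icc (i + 1) j, (k : ℝ) ^ (-a)) ∧
      Real.exp (-(η * γ) * ∑ k ∈ Finset.Icc (i + 1) j, (k : ℝ) ^ (-a)) ≤
        Real.exp (-(γ * η / (1 - a)) * ((j : ℝ) ^ (1 - a) - ((i : ℝ) + 1) ^ (1 - a))) := by
  intro i j hij
  obtain ⟨ha1, ha2⟩ := ha
  have h1a : 0 < 1 - a := by linarith
  have hH := hQ.isHermitian
  have hγ0 : 0 ≤ γ := by
    rw [hγ]
    rcases isEmpty_or_nonempty (Fin d) with h | h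
    · have h0 : (⨅ i, hQ.isHermitian.eigenvalues i) = 0 := Real.iInf_of_isEmpty _
      rw [h0]
      exact le_min le_rfl (by positivity)
    · exact le_min (le_ciInf fun i => (hQ.eigenvalues_pos i).le) (by positivity)
  have hγle : ∀ i : Fin d, γ ≤ hQ.isHermitian.eigenvalues i := by
    intro i
    rw [hγ]
    exact (min_le_left _ _).trans (ciInf_le (Set.Finite.bddBelow (Set.finite_range _)) i)
  have hγη : γ ≤ 1 / (2 * η) := hγ ▸ min_le_right _ _
  -- key factor bound
  have key : ∀ m : ℕ, ‖(1 : Mat d) - ηk (i + 1 + m) • Q‖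
      ≤ Real.exp (-(η * γ) * ((i + 1 + m : ℕ) : ℝ) ^ (-a)) := by
    intro m
    set k := i + 1 + m with hk
    have hk1 : (1 : ℝ) ≤ (k : ℝ) := by
      have : 1 ≤ k := by omega
      exact_mod_cast this
    have hpow0 : 0 ≤ ((k : ℝ)) ^ (-a) := Real.rpow_nonneg (by linarith) _
    have hpow1 : ((k : ℝ)) ^ (-a) ≤ 1 :=
      Real.rpow_le_one_of_one_le_of_nonpos hk1 (by linarith)
    have hs0 : 0 ≤ ηk k := by rw [hηk]; positivity
    have hsη : ηk k ≤ η := by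
      rw [hηk]
      nlinarith
    have hfact : ‖(1 : Mat d) - ηk k • Q‖ ≤ 1 - ηk k * γ := by
      apply factor_norm_le Q hQ hs0 hγle
      · intro l
        have hl0 : 0 ≤ hQ.isHermitian.eigenvalues l := (hQ.eigenvalues_pos l).le
        have hlQ : hQ.isHermitian.eigenvalues l ≤ ‖Q‖ := eig_le_norm Q hQ.isHermitian l
        nlinarith
      · have : ηk k * γ ≤ η * (1 / (2 * η)) :=
          mul_le_mul hsη hγη hγ0 hη.le
        have h2 : η * (1 / (2 * η)) = 1 / 2 := by field_simp
        linarith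
    have hexp : 1 - ηk k * γ ≤ Real.exp (-(ηk k * γ)) := by
      have := Real.add_one_le_exp (-(ηk k * γ))
      linarith
    have harg : -(ηk k * γ) = -(η * γ) * ((k : ℝ)) ^ (-a) := by
      rw [hηk]; ring
    rw [harg] at hexp
    exact hfact.trans hexp
  have hsum_eq : ∑ k ∈ Finset.Icc (i + 1) j, (k : ℝ) ^ (-a)
      = ∑ m ∈ Finset.range (j - i), ((i + 1 + m : ℕ) : ℝ) ^ (-a) := by
    rw [← Finset.Ico_add_one_right_eq_Icc, Finset.sum_Ico_eq_sum_range]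
    have hn : j + 1 - (i + 1) = j - i := by omega
    rw [hn]
  constructor
  · -- Part 1
    have hne : ((List.range (j - i)).map fun m => (1 : Mat d) - ηk (i + 1 + m) • Q) ≠ [] := by
      simp only [ne_eq, List.map_eq_nil_iff, List.range_eq_nil]
      omega
    calc ‖Wprod Q ηk i j‖
        ≤ (((List.range (j - i)).map fun m => (1 : Mat d) - ηk (i + 1 + m) • Q).map norm).prod :=
          List.norm_prod_le' hne
      _ = ∏ m ∈ Finset.range (j - i), ‖(1 : Mat d) - ηk (i + 1 + m) • Q‖ := by
          rw [List.map_map, list_prod_range]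
          rfl
      _ ≤ ∏ m ∈ Finset.range (j - i), Real.exp (-(η * γ) * ((i + 1 + m : ℕ) : ℝ) ^ (-a)) :=
          Finset.prod_le_prod (fun _ _ => norm_nonneg _) (fun m _ => key m)
      _ = Real.exp (∑ m ∈ Finset.range (j - i), -(η * γ) * ((i + 1 + m : ℕ) : ℝ) ^ (-a)) := by
          rw [Real.exp_sum]
      _ = Real.exp (-(η * γ) * ∑ k ∈ Finset.Icc (i + 1) j, (k : ℝ) ^ (-a)) := by
          rw [hsum_eq, Finset.mul_sum]
  · -- Part 2
    apply Real.exp_le_exp.2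
    have hsum := sum_rpow_lb h1a (by linarith) i j hij
    have hηγ : 0 ≤ η * γ := mul_nonneg hη.le hγ0
    set S := ∑ k ∈ Finset.Icc (i + 1) j, (k : ℝ) ^ (-a) with hS
    set T := (j : ℝ) ^ (1 - a) - ((i : ℝ) + 1) ^ (1 - a) with hT
    have h2 : γ * η / (1 - a) * T ≤ η * γ * S := by
      have h3 := mul_le_mul_of_nonneg_left hsum hηγ
      calc γ * η / (1 - a) * T = η * γ * (T / (1 - a)) := by ring
        _ ≤ η * γ * S := h3
    linarith
end
end

section
/- Let Q be a symmetric positive definite d×d real matrix, η > 0 with η‖Q‖₂ ≤ 1, a ∈ (1/2, 1), and η_k = η k^{−a}. Then there exists a constant C > 0, depending only on η, a and λ_min(Q), such that ‖S_i^j‖₂ ≤ C (i+1)^a for all integers j > i ≥ 0. -/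
open MeasureTheory ProbabilityTheory Filter
open scoped Matrix.Norms.L2Operator ENNReal NNReal Topology RealInnerProductSpace

noncomputable section

/-- `S_i^j = ∑_{k=i+1}^j W_i^k`, with `S_i^i = 0`. -/
def Ssum {d : ℕ} (Q : Mat d) (ηk : ℕ → ℝ) (i j : ℕ) : Mat d :=
  ∑ k ∈ Finset.Icc (i + 1) j, Wprod Q ηk i k

private def Pfun (μ a : ℝ) (i k : ℕ) : ℝ :=
  ∏ m ∈ Finset.Icc (i + 1) k, (1 - μ * (m : ℝ) ^ (-a))

private def Tfun (μ a : ℝ) (i j : ℕ) : ℝ :=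
  ∑ k ∈ Finset.Icc (i + 1) j, Pfun μ a i k

set_option maxHeartbeats 1000000 in
private lemma realKey (μ a : ℝ) (hμ0 : 0 < μ) (hμ1 : μ ≤ 1) (ha0 : 0 < a) (ha1 : a < 1) :
    ∃ C : ℝ, 0 < C ∧ ∀ i j : ℕ, Tfun μ a i j ≤ C * ((i : ℝ) + 1) ^ a := by
  have hb0 : ∀ m : ℕ, 0 ≤ μ * (m : ℝ) ^ (-a) := fun m =>
    mul_nonneg hμ0.le (Real.rpow_nonneg (Nat.cast_nonneg m) _)
  have hb1 : ∀ m : ℕ, 1 ≤ m → μ * (m : ℝ) ^ (-a) ≤ 1 := by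
    intro m hm
    have h1 : ((m : ℝ)) ^ (-a) ≤ 1 :=
      Real.rpow_le_one_of_one_le_of_nonpos (by exact_mod_cast hm) (by linarith)
    calc μ * (m : ℝ) ^ (-a) ≤ 1 * 1 :=
          mul_le_mul hμ1 h1 (Real.rpow_nonneg (Nat.cast_nonneg m) _) zero_le_one
      _ = 1 := by ring
  have hP0 : ∀ i k, 0 ≤ Pfun μ a i k := by
    intro i k
    apply Finset.prod_nonneg
    intro m hm
    have hm1 : 1 ≤ m := le_trans (Nat.le_add_left 1 i) (Finset.mem_Icc.mp hm).1
    linarith [hb1 m hm1]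
  have hT0 : ∀ i j, 0 ≤ Tfun μ a i j := fun i j =>
    Finset.sum_nonneg fun k _ => hP0 i k
  -- choice of i₀
  obtain ⟨i₀, hi₀⟩ : ∃ i₀ : ℕ, ∀ i : ℕ, i₀ ≤ i → a * ((i : ℝ) + 1) ^ (a - 1) ≤ μ / 2 := by
    have h1 : Tendsto (fun x : ℝ => x ^ (a - 1)) atTop (nhds 0) := by
      have := tendsto_rpow_neg_atTop (by linarith : (0:ℝ) < 1 - a)
      simpa [neg_sub] using this
    have h2 : Tendsto (fun i : ℕ => (i : ℝ) + 1) atTop atTop :=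
      tendsto_atTop_add_const_right _ 1 tendsto_natCast_atTop_atTop
    have h3 : Tendsto (fun i : ℕ => a * ((i : ℝ) + 1) ^ (a - 1)) atTop (nhds 0) := by
      have := (h1.comp h2).const_mul a
      simpa [Function.comp] using this
    have h4 : ∀ᶠ i : ℕ in atTop, a * ((i : ℝ) + 1) ^ (a - 1) ≤ μ / 2 :=
      h3.eventually (eventually_le_nhds (by linarith))
    exact eventually_atTop.mp h4
  set C₁ : ℝ := 2 / μ with hC₁def
  have hC₁ : 0 < C₁ := by positivity
  -- recurrence
  have hrec : ∀ i j : ℕ, i < j →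
      Tfun μ a i j = (1 - μ * ((i + 1 : ℕ) : ℝ) ^ (-a)) * (1 + Tfun μ a (i + 1) j) := by
    intro i j hij
    have hmem : ∀ k ∈ Finset.Icc (i + 1) j,
        Pfun μ a i k = (1 - μ * ((i + 1 : ℕ) : ℝ) ^ (-a)) * Pfun μ a (i + 1) k := by
      intro k hk
      have h1 : i + 1 ≤ k := (Finset.mem_Icc.mp hk).1
      have h2 : insert (i + 1) (Finset.Icc (i + 1 + 1) k) = Finset.Icc (i + 1) k :=
        Finset.insert_Icc_add_one_left_eq_Icc h1
      unfold Pfun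
      rw [← h2, Finset.prod_insert (by simp [Finset.mem_Icc])]
    have hPtriv : Pfun μ a (i + 1) (i + 1) = 1 := by
      unfold Pfun
      rw [Finset.Icc_eq_empty (by omega), Finset.prod_empty]
    calc Tfun μ a i j
        = ∑ k ∈ Finset.Icc (i + 1) j, (1 - μ * ((i + 1 : ℕ) : ℝ) ^ (-a)) * Pfun μ a (i + 1) k :=
          Finset.sum_congr rfl hmem
      _ = (1 - μ * ((i + 1 : ℕ) : ℝ) ^ (-a)) * ∑ k ∈ Finset.Icc (i + 1) j, Pfun μ a (i + 1) k := by
          rw [Finset.mul_sum]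
      _ = (1 - μ * ((i + 1 : ℕ) : ℝ) ^ (-a)) * (1 + Tfun μ a (i + 1) j) := by
          congr 1
          rw [← Finset.insert_Icc_add_one_left_eq_Icc hij, Finset.sum_insert (by simp [Finset.mem_Icc]),
            hPtriv]
          rfl
  -- main downward induction
  have main : ∀ n i j : ℕ, j - i ≤ n →
      Tfun μ a i j ≤ C₁ * (((max i i₀ : ℕ) : ℝ) + 1) ^ a + ((i₀ - i : ℕ) : ℝ) := by
    intro n
    induction n with
    | zero =>
      intro i j h
      have hji : j ≤ i := by omega
      have : Tfun μ a i j = 0 := by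
        unfold Tfun
        rw [Finset.Icc_eq_empty (by omega), Finset.sum_empty]
      rw [this]
      positivity
    | succ n ih =>
      intro i j h
      by_cases hij : j ≤ i
      · have : Tfun μ a i j = 0 := by
          unfold Tfun
          rw [Finset.Icc_eq_empty (by omega), Finset.sum_empty]
        rw [this]
        positivity
      · push_neg at hij
        have hT' := ih (i + 1) j (by omega)
        have ht0 : 0 ≤ μ * ((i + 1 : ℕ) : ℝ) ^ (-a) := hb0 _
        have ht1 : μ * ((i + 1 : ℕ) : ℝ) ^ (-a) ≤ 1 := hb1 _ (by omega)
        have hTnn : 0 ≤ Tfun μ a (i + 1) j := hT0 _ _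
        rw [hrec i j hij]
        by_cases hi : i₀ ≤ i
        · -- large i
          have hmax1 : max i i₀ = i := max_eq_left hi
          have hmax2 : max (i + 1) i₀ = i + 1 := max_eq_left (by omega)
          have hsub1 : i₀ - i = 0 := by omega
          have hsub2 : i₀ - (i + 1) = 0 := by omega
          rw [hmax1, hsub1]
          rw [hmax2, hsub2] at hT'
          set x : ℝ := (i : ℝ) + 1 with hxdef
          have hx1 : 1 ≤ x := by
            have : (0:ℝ) ≤ (i : ℝ) := Nat.cast_nonneg i
            rw [hxdef]; linarith
          have hx0 : 0 < x := by linarith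
          have hcast : ((i + 1 : ℕ) : ℝ) = x := by push_cast; ring
          have hcast2 : (((i + 1 : ℕ) : ℝ)) + 1 = x + 1 := by rw [hcast]
          rw [hcast] at ht0 ht1 ⊢
          rw [hcast2] at hT'
          push_cast at hT' ⊢
          -- now everything in terms of x
          have hxa0 : 0 < x ^ a := Real.rpow_pos_of_pos hx0 a
          have hxinv : x ^ (-a) * x ^ a = 1 := by
            rw [← Real.rpow_add hx0]; simp
          have hBern : (x + 1) ^ a ≤ x ^ a + a * x ^ (a - 1) := by
            have h1 : x + 1 = x * (1 + 1 / x) := by field_simp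
            rw [h1, Real.mul_rpow (by linarith) (by positivity)]
            have hdx : (-1:ℝ) ≤ 1 / x := by
              have : (0:ℝ) < 1 / x := by positivity
              linarith
            have h2 : (1 + 1 / x) ^ a ≤ 1 + a * (1 / x) :=
              rpow_one_add_le_one_add_mul_self hdx ha0.le ha1.le
            have h3 : x ^ a * (1 + 1 / x) ^ a ≤ x ^ a * (1 + a * (1 / x)) :=
              mul_le_mul_of_nonneg_left h2 hxa0.le
            have h4 : x ^ (a - 1) = x ^ a / x := Real.rpow_sub_one hx0.ne' a
            calc x ^ a * (1 + 1 / x) ^ a ≤ x ^ a * (1 + a * (1 / x)) := h3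
              _ = x ^ a + a * (x ^ a / x) := by field_simp
              _ = x ^ a + a * x ^ (a - 1) := by rw [h4]
          have hsmall : a * x ^ (a - 1) ≤ μ / 2 := hi₀ i hi
          have hmono : (1 - μ * x ^ (-a)) * (1 + Tfun μ a (i + 1) j)
              ≤ (1 - μ * x ^ (-a)) * (1 + C₁ * (x + 1) ^ a) := by
            apply mul_le_mul_of_nonneg_left _ (by linarith)
            linarith
          refine hmono.trans ?_
          -- arithmetic core
          have hF1 : C₁ * (x + 1) ^ a ≤ C₁ * x ^ a + 1 := by
            have : C₁ * (x + 1) ^ a ≤ C₁ * (x ^ a + a * x ^ (a - 1)) :=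
              mul_le_mul_of_nonneg_left hBern hC₁.le
            have h5 : C₁ * (a * x ^ (a - 1)) ≤ C₁ * (μ / 2) :=
              mul_le_mul_of_nonneg_left hsmall hC₁.le
            have h6 : C₁ * (μ / 2) = 1 := by
              rw [hC₁def]; field_simp
            nlinarith
          have hF2 : 2 ≤ μ * x ^ (-a) * (C₁ * (x + 1) ^ a) := by
            have hxx : x ^ a ≤ (x + 1) ^ a :=
              Real.rpow_le_rpow (by linarith) (by linarith) ha0.le
            have h7 : μ * x ^ (-a) * (C₁ * x ^ a) ≤ μ * x ^ (-a) * (C₁ * (x + 1) ^ a) :=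
              mul_le_mul_of_nonneg_left (mul_le_mul_of_nonneg_left hxx hC₁.le) ht0
            have h8 : μ * x ^ (-a) * (C₁ * x ^ a) = μ * C₁ * (x ^ (-a) * x ^ a) := by ring
            have h9 : μ * C₁ = 2 := by rw [hC₁def]; field_simp
            rw [h8, hxinv, mul_one, h9] at h7
            exact h7
          nlinarith [hF1, hF2, ht0, ht1, hC₁]
        · -- small i
          push_neg at hi
          have hmax1 : max i i₀ = i₀ := max_eq_right hi.le
          have hmax2 : max (i + 1) i₀ = i₀ := max_eq_right (by omega)
          have hsubc : ((i₀ - i : ℕ) : ℝ) = ((i₀ - (i + 1) : ℕ) : ℝ) + 1 := by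
            have : i₀ - i = (i₀ - (i + 1)) + 1 := by omega
            rw [this]; push_cast; ring
          rw [hmax1, hsubc]
          rw [hmax2] at hT'
          have hstep : (1 - μ * ((i + 1 : ℕ) : ℝ) ^ (-a)) * (1 + Tfun μ a (i + 1) j)
              ≤ 1 + Tfun μ a (i + 1) j := by
            nlinarith
          linarith
  -- conclusion
  refine ⟨C₁ * ((i₀ : ℝ) + 1) ^ a + (i₀ : ℝ) + 1, by positivity, ?_⟩
  intro i j
  have h := main (j - i) i j le_rfl
  have hmaxle : ((max i i₀ : ℕ) : ℝ) + 1 ≤ ((i : ℝ) + 1) * ((i₀ : ℝ) + 1) := by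
    have h1 : max i i₀ ≤ i + i₀ := max_le (Nat.le_add_right _ _) (Nat.le_add_left _ _)
    have h2 : (max i i₀ : ℕ) + 1 ≤ (i + 1) * (i₀ + 1) := by nlinarith
    exact_mod_cast h2
  have hc2 : (((max i i₀ : ℕ) : ℝ) + 1) ^ a ≤ ((i : ℝ) + 1) ^ a * ((i₀ : ℝ) + 1) ^ a := by
    rw [← Real.mul_rpow (by positivity) (by positivity)]
    exact Real.rpow_le_rpow (by positivity) hmaxle ha0.le
  have hc3 : (1 : ℝ) ≤ ((i : ℝ) + 1) ^ a := by
    have := Real.rpow_le_rpow (by norm_num) (show (1:ℝ) ≤ (i : ℝ) + 1 by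
      have : (0:ℝ) ≤ (i:ℝ) := Nat.cast_nonneg i
      linarith) ha0.le
    simpa using this
  have hc4 : ((i₀ - i : ℕ) : ℝ) ≤ (i₀ : ℝ) := by
    have : (i₀ - i : ℕ) ≤ i₀ := Nat.sub_le _ _
    exact_mod_cast this
  have hi₀0 : (0:ℝ) ≤ (i₀ : ℝ) := Nat.cast_nonneg _
  nlinarith [mul_le_mul_of_nonneg_left hc2 hC₁.le,
    mul_le_mul_of_nonneg_left hc3 hi₀0]


private lemma opnorm_le_of_sandwich {d : ℕ} (T : EuclideanSpace ℝ (Fin d) →L[ℝ] EuclideanSpace ℝ (Fin d))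
    (hsym : ∀ x y, ⟪T x, y⟫ = ⟪x, T y⟫) {c : ℝ} (hc0 : 0 ≤ c)
    (h0 : ∀ x, 0 ≤ ⟪x, T x⟫) (hc : ∀ x, ⟪x, T x⟫ ≤ c * ‖x‖ ^ 2) :
    ‖T‖ ≤ c := by
  refine T.opNorm_le_bound hc0 fun x => ?_
  set y := T x with hy
  have hq : ∀ r : ℝ, 0 ≤ ⟪y, T y⟫ * (r * r) + (-(2 * ⟪x, T y⟫)) * r + ⟪x, T x⟫ := by
    intro r
    have h := h0 (x - r • y)
    have e1 : T (x - r • y) = T x - r • T y := by rw [map_sub, T.map_smul]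
    rw [e1] at h
    have e2 : ⟪x - r • y, T x - r • T y⟫
        = ⟪x, T x⟫ - r * ⟪x, T y⟫ - r * ⟪y, T x⟫ + (r * r) * ⟪y, T y⟫ := by
      simp only [inner_sub_left, inner_sub_right, real_inner_smul_left, real_inner_smul_right]
      ring
    have e3 : ⟪y, T x⟫ = ⟪x, T y⟫ := by
      rw [← hsym x y, real_inner_comm]
    rw [e2, e3] at h
    nlinarith [h]
  have hdisc := discrim_le_zero hq
  rw [discrim] at hdisc
  have e4 : ⟪x, T y⟫ = ‖y‖ ^ 2 := by
    rw [← hsym x y, ← hy, real_inner_self_eq_norm_sq]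
  rw [e4] at hdisc
  have h1 : ⟪x, T x⟫ ≤ c * ‖x‖ ^ 2 := hc x
  have h2 : ⟪y, T y⟫ ≤ c * ‖y‖ ^ 2 := hc y
  have h3 : 0 ≤ ⟪x, T x⟫ := h0 x
  have h4 : 0 ≤ ⟪y, T y⟫ := h0 y
  -- ‖y‖^4 ≤ c^2 ‖x‖^2 ‖y‖^2
  have h5 : ‖y‖ ^ 2 * ‖y‖ ^ 2 ≤ (c * ‖x‖) ^ 2 * ‖y‖ ^ 2 := by nlinarith
  rcases eq_or_lt_of_le (norm_nonneg y) with hy0 | hy0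
  · rw [← hy0]
    positivity
  · have h6 : ‖y‖ ^ 2 ≤ (c * ‖x‖) ^ 2 :=
      le_of_mul_le_mul_right (by nlinarith) (pow_pos hy0 2)
    have h7 : 0 ≤ c * ‖x‖ := by positivity
    nlinarith


private lemma pfun_nonneg {μ a : ℝ} (hμ0 : 0 ≤ μ) (hμ1 : μ ≤ 1) (ha0 : 0 < a)
    (i k : ℕ) : 0 ≤ Pfun μ a i k := by
  apply Finset.prod_nonneg
  intro m hm
  have hm1 : 1 ≤ m := le_trans (Nat.le_add_left 1 i) (Finset.mem_Icc.mp hm).1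
  have h1 : ((m : ℝ)) ^ (-a) ≤ 1 :=
    Real.rpow_le_one_of_one_le_of_nonpos (by exact_mod_cast hm1) (by linarith)
  have h2 : 0 ≤ ((m : ℝ)) ^ (-a) := Real.rpow_nonneg (Nat.cast_nonneg m) _
  nlinarith

private lemma wprod_norm_le {d : ℕ} (Q : Mat d) (ηk : ℕ → ℝ) {μ a : ℝ}
    (hμ0 : 0 ≤ μ) (hμ1 : μ ≤ 1) (ha0 : 0 < a)
    (hfac : ∀ k : ℕ, 1 ≤ k → ‖(1 : Mat d) - ηk k • Q‖ ≤ 1 - μ * (k : ℝ) ^ (-a)) :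
    ∀ i n : ℕ, ‖Wprod Q ηk i (i + n)‖ ≤ Pfun μ a i (i + n) := by
  intro i n
  induction n with
  | zero =>
    have h1 : Wprod Q ηk i (i + 0) = 1 := by
      unfold Wprod
      simp
    have h2 : Pfun μ a i (i + 0) = 1 := by
      unfold Pfun
      rw [Finset.Icc_eq_empty (by omega), Finset.prod_empty]
    rw [h1, h2, Matrix.cstar_norm_def, map_one]
    exact ContinuousLinearMap.norm_id_le
  | succ n ih =>
    have h1 : Wprod Q ηk i (i + (n + 1))
        = Wprod Q ηk i (i + n) * ((1 : Mat d) - ηk (i + 1 + n) • Q) := by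
      unfold Wprod
      have e1 : i + (n + 1) - i = n + 1 := by omega
      have e2 : i + n - i = n := by omega
      rw [e1, e2, List.range_succ, List.map_append, List.prod_append]
      simp
    have e4 : i + 1 + n = i + n + 1 := by omega
    rw [e4] at h1
    have h2 : Pfun μ a i (i + (n + 1))
        = Pfun μ a i (i + n) * (1 - μ * ((i + n + 1 : ℕ) : ℝ) ^ (-a)) := by
      unfold Pfun
      have e3 : i + (n + 1) = (i + n) + 1 := by omega
      rw [e3, Finset.prod_Icc_succ_top (by omega)]
    rw [h1, h2]
    have h3 : ‖(1 : Mat d) - ηk (i + n + 1) • Q‖ ≤ 1 - μ * ((i + n + 1 : ℕ) : ℝ) ^ (-a) :=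
      hfac _ (by omega)
    calc ‖Wprod Q ηk i (i + n) * ((1 : Mat d) - ηk (i + n + 1) • Q)‖
        ≤ ‖Wprod Q ηk i (i + n)‖ * ‖(1 : Mat d) - ηk (i + n + 1) • Q‖ := norm_mul_le _ _
      _ ≤ Pfun μ a i (i + n) * (1 - μ * ((i + n + 1 : ℕ) : ℝ) ^ (-a)) := by
          apply mul_le_mul ih h3 (norm_nonneg _) (pfun_nonneg hμ0 hμ1 ha0 _ _)

set_option maxHeartbeats 1000000 in
/-- **Lemma A.4**: for a symmetric positive definite `Q` with `η‖Q‖₂ ≤ 1` and step sizes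
`η_k = η k^(-a)`, `a ∈ (1/2, 1)`, the partial sums `S_i^j` satisfy
`‖S_i^j‖₂ ≤ C (i+1)^a` for a constant `C` depending only on `η`, `a` and `λ_min(Q)`. -/
theorem matrix_partial_sum_bound {d : ℕ} (Q : Mat d) (hQ : Q.PosDef) (hQsymm : Q.IsSymm)
    (η a : ℝ) (hη : 0 < η) (hηQ : η * ‖Q‖ ≤ 1) (ha : a ∈ Set.Ioo (1 / 2 : ℝ) 1)
    (ηk : ℕ → ℝ) (hηk : ∀ k : ℕ, ηk k = η * (k : ℝ) ^ (-a)) :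
    ∃ C : ℝ, 0 < C ∧ ∀ i j : ℕ, i < j →
      ‖Ssum Q ηk i j‖ ≤ C * ((i : ℝ) + 1) ^ a := by
  obtain ⟨ha1, ha2⟩ := ha
  have ha0 : 0 < a := by linarith
  rcases Nat.eq_zero_or_pos d with hd | hd
  · subst hd
    refine ⟨1, one_pos, fun i j _ => ?_⟩
    have h0 : Ssum Q ηk i j = 0 := Subsingleton.elim _ _
    rw [h0, norm_zero]
    positivity
  · set T := Matrix.toEuclideanCLM (𝕜 := ℝ) (n := Fin d) Q with hTdef
    have hnormT : ‖Q‖ = ‖T‖ := Matrix.cstar_norm_def Q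
    have hsa : ∀ x y : Vec d, ⟪T x, y⟫ = ⟪x, T y⟫ := by
      have h2 : IsSelfAdjoint T := by
        rw [IsSelfAdjoint, hTdef, ← map_star]
        congr 1
        all_goals exact hQ.1
      exact fun x y => (ContinuousLinearMap.isSelfAdjoint_iff_isSymmetric.mp h2) x y
    have hposx : ∀ x : Vec d, x ≠ 0 → 0 < ⟪x, T x⟫ := by
      intro x hx
      have hx' : (WithLp.equiv 2 (Fin d → ℝ)) x ≠ 0 := by
        intro h
        apply hx
        have := congrArg (WithLp.equiv 2 (Fin d → ℝ)).symm h
        simpa using this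
      have h := hQ.dotProduct_mulVec_pos hx'
      have e2 : (WithLp.equiv 2 (Fin d → ℝ)) (T x)
          = Matrix.mulVec Q ((WithLp.equiv 2 (Fin d → ℝ)) x) := by
        rw [hTdef]; exact Matrix.ofLp_toEuclideanCLM Q x
      have e : ⟪x, T x⟫
          = dotProduct (star ((WithLp.equiv 2 (Fin d → ℝ)) x))
            (Matrix.mulVec Q ((WithLp.equiv 2 (Fin d → ℝ)) x)) := by
        rw [EuclideanSpace.inner_eq_star_dotProduct, dotProduct_comm, ← e2]; rfl
      rw [e]
      exact h
    -- minimum of the quadratic form on the unit sphere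
    have hcont : Continuous fun x : Vec d => ⟪x, T x⟫ :=
      continuous_id.inner T.continuous
    have hsne : (Metric.sphere (0 : Vec d) 1).Nonempty := by
      refine ⟨EuclideanSpace.single ⟨0, hd⟩ (1 : ℝ), ?_⟩
      simp [mem_sphere_iff_norm]
    obtain ⟨x₀, hx₀s, hmin⟩ :=
      (isCompact_sphere (0 : Vec d) 1).exists_isMinOn hsne hcont.continuousOn
    have hx₀n : ‖x₀‖ = 1 := mem_sphere_zero_iff_norm.mp hx₀s
    set lam : ℝ := ⟪x₀, T x₀⟫ with hlamdef
    have hlam0 : 0 < lam := by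
      apply hposx
      intro h
      rw [h, norm_zero] at hx₀n
      norm_num at hx₀n
    have hlam : ∀ x : Vec d, lam * ‖x‖ ^ 2 ≤ ⟪x, T x⟫ := by
      intro x
      rcases eq_or_ne x 0 with rfl | hx
      · simp
      · have hxn : 0 < ‖x‖ := norm_pos_iff.mpr hx
        have hu : ‖(‖x‖⁻¹ • x : Vec d)‖ = 1 := by
          rw [norm_smul, norm_inv, norm_norm]
          field_simp
        have h1 : lam ≤ ⟪(‖x‖⁻¹ • x : Vec d), T (‖x‖⁻¹ • x)⟫ :=
          hmin (mem_sphere_zero_iff_norm.mpr hu)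
        have h2 : ⟪(‖x‖⁻¹ • x : Vec d), T (‖x‖⁻¹ • x)⟫
            = (‖x‖⁻¹) ^ 2 * ⟪x, T x⟫ := by
          rw [T.map_smul]
          simp only [real_inner_smul_left, real_inner_smul_right, smul_eq_mul]
          ring
        rw [h2] at h1
        have h3 := mul_le_mul_of_nonneg_left h1 (sq_nonneg ‖x‖)
        have h4 : ‖x‖ ^ 2 * ((‖x‖⁻¹) ^ 2 * ⟪x, T x⟫) = ⟪x, T x⟫ := by
          field_simp
        rw [h4] at h3
        linarith [h3]
    have hub : ∀ x : Vec d, ⟪x, T x⟫ ≤ ‖Q‖ * ‖x‖ ^ 2 := by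
      intro x
      calc ⟪x, T x⟫ ≤ ‖x‖ * ‖T x‖ := real_inner_le_norm x (T x)
        _ ≤ ‖x‖ * (‖T‖ * ‖x‖) :=
            mul_le_mul_of_nonneg_left (T.le_opNorm x) (norm_nonneg x)
        _ = ‖T‖ * ‖x‖ ^ 2 := by ring
        _ = ‖Q‖ * ‖x‖ ^ 2 := by rw [hnormT]
    have hlamQ : lam ≤ ‖Q‖ := by
      have := hub x₀
      rw [hx₀n] at this
      simpa using this
    have hQ0 : 0 ≤ ‖Q‖ := norm_nonneg Q
    -- factor bound
    have hfac : ∀ k : ℕ, 1 ≤ k →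
        ‖(1 : Mat d) - ηk k • Q‖ ≤ 1 - (η * lam) * (k : ℝ) ^ (-a) := by
      intro k hk
      set t : ℝ := ηk k with htdef
      have htv : t = η * (k : ℝ) ^ (-a) := hηk k
      have hka : 0 ≤ ((k : ℝ)) ^ (-a) := Real.rpow_nonneg (Nat.cast_nonneg k) _
      have hka1 : ((k : ℝ)) ^ (-a) ≤ 1 :=
        Real.rpow_le_one_of_one_le_of_nonpos (by exact_mod_cast hk) (by linarith)
      have ht0 : 0 ≤ t := by rw [htv]; positivity
      have htη : t ≤ η := by
        rw [htv]
        nlinarith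
      have htQ : t * ‖Q‖ ≤ 1 := by nlinarith
      have htlam : t * lam ≤ 1 := by nlinarith
      have hc0 : (0:ℝ) ≤ 1 - t * lam := by linarith
      have hTA : Matrix.toEuclideanCLM (𝕜 := ℝ) (n := Fin d) ((1 : Mat d) - t • Q)
          = 1 - t • T := by
        rw [map_sub, map_one, _root_.map_smul, hTdef]
      have happ : ∀ x : Vec d, ⟪x, (1 - t • T) x⟫ = ‖x‖ ^ 2 - t * ⟪x, T x⟫ := by
        intro x
        have : ((1 - t • T) x) = x - t • T x := by
          simp [ContinuousLinearMap.sub_apply, ContinuousLinearMap.smul_apply]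
        rw [this, inner_sub_right, real_inner_smul_right, real_inner_self_eq_norm_sq]
      have hbound : ‖(1 : Mat d) - t • Q‖ ≤ 1 - t * lam := by
        rw [Matrix.cstar_norm_def, hTA]
        apply opnorm_le_of_sandwich
        · intro x y
          simp only [ContinuousLinearMap.sub_apply, ContinuousLinearMap.smul_apply,
            ContinuousLinearMap.one_apply]
          rw [inner_sub_left, inner_sub_right, real_inner_smul_left, real_inner_smul_right,
            hsa x y]
        · exact hc0
        · intro x
          rw [happ x]
          have := hub x
          nlinarith [sq_nonneg ‖x‖]
        · intro x
          rw [happ x]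
          have := hlam x
          nlinarith
      have : 1 - t * lam = 1 - (η * lam) * (k : ℝ) ^ (-a) := by
        rw [htv]; ring
      rw [← this]
      exact hbound
    -- real-sequence bound
    have hμ'0 : 0 < η * lam := by positivity
    have hμ'1 : η * lam ≤ 1 := by nlinarith
    obtain ⟨C, hC, hCb⟩ := realKey (η * lam) a hμ'0 hμ'1 ha0 ha2
    refine ⟨C, hC, fun i j hij => ?_⟩
    calc ‖Ssum Q ηk i j‖
        ≤ ∑ k ∈ Finset.Icc (i + 1) j, ‖Wprod Q ηk i k‖ := norm_sum_le _ _
      _ ≤ ∑ k ∈ Finset.Icc (i + 1) j, Pfun (η * lam) a i k := by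
          apply Finset.sum_le_sum
          intro k hk
          have hik : i ≤ k := by
            have := (Finset.mem_Icc.mp hk).1
            omega
          have h := wprod_norm_le Q ηk hμ'0.le hμ'1 ha0 hfac i (k - i)
          rwa [Nat.add_sub_cancel' hik] at h
      _ = Tfun (η * lam) a i j := rfl
      _ ≤ C * ((i : ℝ) + 1) ^ a := hCb i j
end
end

section
/- Let η > 0, α ∈ (1/2, 1), η_k = η k^{−α}, c > 0 with cη_1 ≤ 1, C ≥ 0, and s > 1. If (b_k)_{k≥0} is a sequence of nonnegative reals satisfying b_{k+1} ≤ (1 − c η_{k+1}) b_k + C η_{k+1}^s for all k ≥ 0, then there exists a constant C' > 0 (depending only on η, α, c, C, s and b_0) such that b_k ≤ C' η_k^{s−1} for all k ≥ 1. -/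
open MeasureTheory ProbabilityTheory Filter
open scoped Matrix.Norms.L2Operator ENNReal NNReal Topology RealInnerProductSpace

noncomputable section

/-- Bernoulli-type bound: `(1+x)^n ≤ 1 + (2^n - 1) x` for `x ∈ [0,1]`. -/
lemma one_add_pow_le_aux (n : ℕ) (x : ℝ) (hx0 : 0 ≤ x) (hx1 : x ≤ 1) :
    (1 + x) ^ n ≤ 1 + ((2:ℝ)^n - 1) * x := by
  induction n with
  | zero => simp
  | succ n ih =>
    have h2 : (1:ℝ) ≤ 2^n := one_le_pow₀ (by norm_num)
    have hx : (0:ℝ) ≤ 1 + x := by linarith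
    calc (1+x)^(n+1) = (1+x)^n * (1+x) := pow_succ _ _
      _ ≤ (1 + ((2:ℝ)^n - 1)*x) * (1+x) := mul_le_mul_of_nonneg_right ih hx
      _ ≤ 1 + ((2:ℝ)^(n+1) - 1) * x := by
          nlinarith [pow_succ (2:ℝ) n,
            mul_nonneg (mul_nonneg (sub_nonneg.mpr h2) hx0) (sub_nonneg.mpr hx1)]

set_option maxHeartbeats 1600000 in
/-- The deterministic recursion lemma behind Lemma B.4: if a nonnegative sequence `b_k`
satisfies `b_(k+1) ≤ (1 - c η_(k+1)) b_k + C η_(k+1)^s` with `η_k = η k^(-α)`,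
`α ∈ (1/2, 1)`, `c η₁ ≤ 1` and `s > 1`, then `b_k = O(η_k^(s-1))`. -/
theorem recursion_rate_lemma (η α c C s : ℝ) (hη : 0 < η)
    (hα : α ∈ Set.Ioo (1 / 2 : ℝ) 1) (hc : 0 < c) (hC : 0 ≤ C) (hs : 1 < s)
    (ηk : ℕ → ℝ) (hηk : ∀ k : ℕ, ηk k = η * (k : ℝ) ^ (-α))
    (hcη : c * ηk 1 ≤ 1)
    (b : ℕ → ℝ) (hb : ∀ k, 0 ≤ b k)
    (hrec : ∀ k : ℕ, b (k + 1) ≤ (1 - c * ηk (k + 1)) * b k + C * ηk (k + 1) ^ s) :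
    ∃ C' : ℝ, 0 < C' ∧ ∀ k : ℕ, 1 ≤ k → b k ≤ C' * ηk k ^ (s - 1) := by
  obtain ⟨hα1, hα2⟩ := hα
  have hα0 : (0:ℝ) < α := by linarith
  have hs1 : (0:ℝ) < s - 1 := by linarith
  set β := α * (s - 1) with hβdef
  have hβ : 0 < β := mul_pos hα0 hs1
  set n := ⌈β⌉₊ with hndef
  set M := ((2:ℝ)^n - 1) with hMdef
  have hM0 : 0 ≤ M := by
    have : (1:ℝ) ≤ 2^n := one_le_pow₀ (by norm_num)
    simp only [hMdef]; linarith
  -- positivity of ηk for k ≥ 1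
  have hηkpos : ∀ k : ℕ, 1 ≤ k → 0 < ηk k := by
    intro k hk
    have hk0 : (0:ℝ) < (k:ℝ) := by exact_mod_cast hk
    rw [hηk]
    positivity
  -- c * ηk k ≤ 1 for k ≥ 1
  have hce1 : ∀ k : ℕ, 1 ≤ k → c * ηk k ≤ 1 := by
    intro k hk
    have hk1 : (1:ℝ) ≤ (k:ℝ) := by exact_mod_cast hk
    have h1 : ηk k ≤ ηk 1 := by
      rw [hηk, hηk]
      have h2 : ((k:ℝ)) ^ (-α) ≤ 1 :=
        Real.rpow_le_one_of_one_le_of_nonpos hk1 (by linarith)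
      have h3 : ((1:ℕ):ℝ) ^ (-α) = 1 := by norm_num
      rw [h3]
      nlinarith
    nlinarith
  -- ratio bound
  have hratio : ∀ k : ℕ, 1 ≤ k → 4*M ≤ c*η*(k:ℝ)^((1:ℝ)-α) →
      ηk k ^ (s-1) ≤ (1 + (c/2)*ηk (k+1)) * ηk (k+1) ^ (s-1) := by
    intro k hk h4M
    have hk0 : (0:ℝ) < (k:ℝ) := by exact_mod_cast hk
    have hk1 : (1:ℝ) ≤ (k:ℝ) := by exact_mod_cast hk
    set kr := (k:ℝ) with hkr
    have hkr1 : (0:ℝ) < kr + 1 := by linarith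
    -- Step A : ((kr+1)/kr)^β ≤ 1 + (c/2) * ηk (k+1)
    have hx0 : 0 < 1/kr := by positivity
    have hx1 : 1/kr ≤ 1 := by rw [div_le_one hk0]; linarith
    have hA1 : ((kr+1)/kr) = 1 + 1/kr := by field_simp
    have hA2 : ((kr+1)/kr) ^ β ≤ (1 + 1/kr) ^ n := by
      rw [hA1]
      calc (1 + 1/kr) ^ β ≤ (1 + 1/kr) ^ (n:ℝ) :=
            Real.rpow_le_rpow_of_exponent_le (by linarith) (Nat.le_ceil β)
        _ = (1 + 1/kr) ^ n := Real.rpow_natCast _ n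
    have hA3 : (1 + 1/kr) ^ n ≤ 1 + M * (1/kr) :=
      one_add_pow_le_aux n (1/kr) (le_of_lt hx0) hx1
    -- M/kr ≤ (c/2) * ηk (k+1)
    have hpow2 : (kr+1) ^ (-α) ≥ kr ^ (-α) / 2 := by
      have h1 : (kr+1) ^ α ≤ 2 * kr ^ α := by
        have h2 : (kr+1) ^ α ≤ (2*kr) ^ α :=
          Real.rpow_le_rpow (by linarith) (by linarith) (le_of_lt hα0)
        have h3 : (2*kr) ^ α = 2 ^ α * kr ^ α := Real.mul_rpow (by norm_num) hk0.le
        have h4 : (2:ℝ) ^ α ≤ 2 := by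
          calc (2:ℝ) ^ α ≤ (2:ℝ) ^ (1:ℝ) :=
                Real.rpow_le_rpow_of_exponent_le (by norm_num) (le_of_lt hα2)
            _ = 2 := Real.rpow_one 2
        have h5 : (0:ℝ) ≤ kr ^ α := (Real.rpow_pos_of_pos hk0 α).le
        nlinarith
      have hpa : (0:ℝ) < (kr+1) ^ α := Real.rpow_pos_of_pos hkr1 α
      have hpk : (0:ℝ) < kr ^ α := Real.rpow_pos_of_pos hk0 α
      rw [Real.rpow_neg hkr1.le, Real.rpow_neg hk0.le]
      have h9 : (kr^α)⁻¹ / 2 = (2*kr^α)⁻¹ := by rw [mul_inv]; ring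
      rw [ge_iff_le, h9]
      gcongr
    have hMk : M * (1/kr) ≤ (c/2) * ηk (k+1) := by
      have he : ηk (k+1) = η * (kr+1) ^ (-α) := by
        rw [hηk]; push_cast; rfl
      have hsplit : kr ^ ((1:ℝ)-α) = kr * kr ^ (-α) := by
        rw [show (1:ℝ) - α = 1 + (-α) by ring, Real.rpow_add hk0, Real.rpow_one]
      have hka : (0:ℝ) < kr ^ (-α) := Real.rpow_pos_of_pos hk0 _
      rw [he]
      have h6 : 4*M ≤ c*η*(kr * kr ^ (-α)) := by rw [← hsplit]; exact h4M
      have h7 : (c/2) * (η * (kr+1)^(-α)) ≥ (c/2) * (η * (kr ^ (-α)/2)) := by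
        have := hpow2
        have hcη2 : 0 < c/2 * η := by positivity
        nlinarith
      have h8 : M * (1/kr) ≤ (c/2) * (η * (kr ^ (-α)/2)) := by
        rw [mul_one_div, div_le_iff₀ hk0]
        nlinarith
      linarith
    have hA : ((kr+1)/kr) ^ β ≤ 1 + (c/2) * ηk (k+1) := by
      calc ((kr+1)/kr) ^ β ≤ 1 + M * (1/kr) := le_trans hA2 hA3
        _ ≤ 1 + (c/2) * ηk (k+1) := by linarith
    -- Step B : ηk k ^ (s-1) = ((kr+1)/kr)^β * ηk (k+1) ^ (s-1)
    have hB : ηk k ^ (s-1) = ((kr+1)/kr) ^ β * ηk (k+1) ^ (s-1) := by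
      have he1 : ηk k ^ (s-1) = η ^ (s-1) * kr ^ (-β) := by
        rw [hηk, Real.mul_rpow (le_of_lt hη) (Real.rpow_nonneg hk0.le _),
          ← Real.rpow_mul hk0.le]
        congr 1
        rw [hβdef]; ring
      have he2 : ηk (k+1) ^ (s-1) = η ^ (s-1) * (kr+1) ^ (-β) := by
        have hcast : ((k+1:ℕ):ℝ) = kr + 1 := by push_cast; rfl
        rw [hηk, hcast, Real.mul_rpow (le_of_lt hη) (Real.rpow_nonneg hkr1.le _)]
        rw [← Real.rpow_mul hkr1.le]
        congr 1
        rw [hβdef]; ring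
      have he3 : ((kr+1)/kr) ^ β = (kr+1) ^ β * kr ^ (-β) := by
        rw [Real.div_rpow hkr1.le hk0.le, Real.rpow_neg hk0.le,
          div_eq_mul_inv]
      have he4 : (kr+1) ^ β * (kr+1) ^ (-β) = 1 := by
        rw [← Real.rpow_add hkr1]; simp
      rw [he1, he2, he3]
      calc η ^ (s-1) * kr ^ (-β)
          = ((kr+1) ^ β * (kr+1) ^ (-β)) * (η ^ (s-1) * kr ^ (-β)) := by rw [he4]; ring
        _ = (kr+1) ^ β * kr ^ (-β) * (η ^ (s-1) * (kr+1) ^ (-β)) := by ring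
    rw [hB]
    have hp : (0:ℝ) ≤ ηk (k+1) ^ (s-1) :=
      (Real.rpow_pos_of_pos (hηkpos (k+1) (by omega)) _).le
    exact mul_le_mul_of_nonneg_right hA hp
  -- choose K
  obtain ⟨K, hK⟩ : ∃ K : ℕ, ∀ k ≥ K, 4*M ≤ c*η*(k:ℝ)^((1:ℝ)-α) := by
    have h1 : Tendsto (fun k : ℕ => (k:ℝ) ^ ((1:ℝ)-α)) atTop atTop :=
      (tendsto_rpow_atTop (by linarith : (0:ℝ) < 1 - α)).comp tendsto_natCast_atTop_atTop
    have h2 : Tendsto (fun k : ℕ => c*η*(k:ℝ) ^ ((1:ℝ)-α)) atTop atTop :=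
      Tendsto.const_mul_atTop (by positivity) h1
    exact eventually_atTop.mp (h2.eventually_ge_atTop (4*M))
  set K' := max K 1 with hK'def
  have hK'1 : 1 ≤ K' := le_max_right K 1
  set D := max (2*C/c) 1 with hDdef
  have hD1 : (1:ℝ) ≤ D := le_max_right _ _
  have hDC : 2*C/c ≤ D := le_max_left _ _
  set S := ∑ j ∈ Finset.range (K'+1), b j / ηk j ^ (s-1) with hSdef
  have hS0 : 0 ≤ S := by
    apply Finset.sum_nonneg
    intro j _
    have h1 : 0 ≤ ηk j ^ (s-1) := by
      rcases Nat.eq_zero_or_pos j with h | h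
      · subst h
        simp only [hηk]
        positivity
      · exact (Real.rpow_pos_of_pos (hηkpos j h) _).le
    exact div_nonneg (hb j) h1
  have hCD : 0 < D + S := by linarith
  refine ⟨D + S, hCD, ?_⟩
  -- the bound for 1 ≤ k ≤ K'
  have hsmall : ∀ k, 1 ≤ k → k ≤ K' → b k ≤ (D + S) * ηk k ^ (s-1) := by
    intro k h1 h2
    have hp : 0 < ηk k ^ (s-1) := Real.rpow_pos_of_pos (hηkpos k h1) _
    have hmem : k ∈ Finset.range (K'+1) := Finset.mem_range.mpr (by omega)
    have hle : b k / ηk k ^ (s-1) ≤ S := by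
      apply Finset.single_le_sum (f := fun j => b j / ηk j ^ (s-1)) _ hmem
      intro j _
      have h3 : 0 ≤ ηk j ^ (s-1) := by
        rcases Nat.eq_zero_or_pos j with h | h
        · subst h; simp only [hηk]; positivity
        · exact (Real.rpow_pos_of_pos (hηkpos j h) _).le
      exact div_nonneg (hb j) h3
    rw [div_le_iff₀ hp] at hle
    nlinarith
  -- induction step beyond K'
  have hstep : ∀ k, K' ≤ k → b k ≤ (D + S) * ηk k ^ (s-1) →
      b (k+1) ≤ (D + S) * ηk (k+1) ^ (s-1) := by
    intro k hkK ih
    have hk1 : 1 ≤ k := le_trans hK'1 hkK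
    have he : 0 < ηk (k+1) := hηkpos (k+1) (by omega)
    have hp : 0 < ηk (k+1) ^ (s-1) := Real.rpow_pos_of_pos he _
    have hq := hratio k hk1 (hK k (le_trans (le_max_left K 1) hkK))
    have hes : ηk (k+1) ^ s = ηk (k+1) * ηk (k+1) ^ (s-1) := by
      rw [show s = 1 + (s-1) by ring, Real.rpow_add he, Real.rpow_one]
      ring_nf
    have hce : c * ηk (k+1) ≤ 1 := hce1 (k+1) (by omega)
    have h2C : 2*C ≤ (D+S)*c := by
      rw [div_le_iff₀ hc] at hDC
      nlinarith
    have hbk := hb k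
    have h1 := hrec k
    rw [hes] at h1
    -- b (k+1) ≤ (1 - c e) * b k + C * e * p
    have h3 : (1 - c * ηk (k+1)) * b k ≤
        (1 - c * ηk (k+1)) * ((D+S) * ((1 + (c/2)*ηk (k+1)) * ηk (k+1) ^ (s-1))) := by
      apply mul_le_mul_of_nonneg_left _ (by linarith)
      calc b k ≤ (D+S) * ηk k ^ (s-1) := ih
        _ ≤ (D+S) * ((1 + (c/2)*ηk (k+1)) * ηk (k+1) ^ (s-1)) :=
            mul_le_mul_of_nonneg_left hq (le_of_lt hCD)
    nlinarith [mul_pos he hp, mul_nonneg (mul_nonneg (le_of_lt hc) (le_of_lt hc))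
      (mul_nonneg (mul_nonneg he.le he.le) (mul_nonneg hCD.le hp.le)),
      mul_le_mul_of_nonneg_right h2C (mul_nonneg he.le hp.le)]
  -- combine
  intro k hk1
  rcases le_or_gt k K' with h | h
  · exact hsmall k hk1 h
  · obtain ⟨m, rfl⟩ : ∃ m, k = K' + m := ⟨k - K', by omega⟩
    clear h hk1
    induction m with
    | zero => exact hsmall K' hK'1 (le_refl _)
    | succ m ih => exact hstep (K' + m) (Nat.le_add_right _ _) ih
end
end
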